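/- Let d ∈ (0,1/2), let ν be a Borel measure on (0,∞), let R > 0 and a > 0, and set A = (a/d)·R^{1−d}. Assume ν([A,∞)) < ∞ and ∫_{(0,A)} x^{1/(1−d)} ν(dx) < ∞. Define F(u) = ∫_0^R ν([(u/d)·s^{1−d}, ∞)) ds for u > 0. Then ∫_0^a u·F(u) du ≤ (a²(1−d)/(1−2d)) · [ R·ν([A,∞)) + (d/a)^{1/(1−d)} ∫_{(0,A)} x^{1/(1−d)} ν(dx) ]. -/

import Mathlib

open MeasureTheory
open scoped ENNReal

/-- Inequality (3.5) of the paper: with `F(u) = ∫_0^R ν([(u/d)s^{1−d},∞)) ds`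
and `A = (a/d)R^{1−d}`, assuming `ν([A,∞)) < ∞` and `∫_{(0,A)} x^{1/(1−d)} ν(dx) < ∞`,
`∫_0^a u·F(u) du ≤ (a²(1−d)/(1−2d))·[ R·ν([A,∞)) + (d/a)^{1/(1−d)} ∫_{(0,A)} x^{1/(1−d)} ν(dx) ]`. -/
theorem stmt_10 (d : ℝ) (hd : d ∈ Set.Ioo (0 : ℝ) (1 / 2)) (ν : Measure ℝ)
    (hν0 : ν (Set.Iic 0) = 0) (R a : ℝ) (hR : 0 < R) (ha : 0 < a)
    (A : ℝ) (hA : A = a / d * R ^ (1 - d))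
    (htail : ν (Set.Ici A) < ⊤)
    (hmom : ∫⁻ x in Set.Ioo 0 A, ENNReal.ofReal (x ^ (1 / (1 - d))) ∂ν < ⊤) :
    ∫⁻ u in Set.Ioc 0 a,
        ENNReal.ofReal u * ∫⁻ s in Set.Ioc 0 R, ν (Set.Ici (u / d * s ^ (1 - d)))
      ≤ ENNReal.ofReal (a ^ 2 * (1 - d) / (1 - 2 * d)) *
          (ENNReal.ofReal R * ν (Set.Ici A)
            + ENNReal.ofReal ((d / a) ^ (1 / (1 - d))) *
                ∫⁻ x in Set.Ioo 0 A, ENNReal.ofReal (x ^ (1 / (1 - d))) ∂ν) := by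
  obtain ⟨hd0, hd2⟩ := hd
  have h1d : 0 < 1 - d := by linarith
  have h12d : 0 < 1 - 2 * d := by linarith
  set q : ℝ := 1 / (1 - d) with hq
  have hq0 : 0 < q := by positivity
  have hq1 : 1 < q := by rw [hq, lt_div_iff₀ h1d]; linarith
  have hq2 : q < 2 := by rw [hq, div_lt_iff₀ h1d]; linarith
  have h2q : 0 < 2 - q := by linarith
  set μ := ν.restrict (Set.Ioo 0 A) with hμ
  set T := ν (Set.Ici A) with hT
  set M := ∫⁻ x, ENNReal.ofReal (x ^ q) ∂μ with hM
  -- σ-finiteness of μ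
  have hfin : ∀ n : ℕ, μ (Set.Ici (1 / (n + 1) : ℝ)) < ⊤ := by
    intro n
    have hε : (0:ℝ) < 1 / (n + 1) := by positivity
    have hε' : (0:ℝ) < (1 / (n + 1) : ℝ) ^ q := Real.rpow_pos_of_pos hε q
    have hsub : Set.Ici (1 / (n + 1) : ℝ) ⊆
        {x | ENNReal.ofReal ((1 / (n + 1) : ℝ) ^ q) ≤ ENNReal.ofReal (x ^ q)} := fun x hx =>
      ENNReal.ofReal_le_ofReal (Real.rpow_le_rpow hε.le hx hq0.le)
    calc μ (Set.Ici (1 / (n + 1) : ℝ)) ≤ _ := measure_mono hsub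
      _ ≤ M / ENNReal.ofReal ((1 / (n + 1) : ℝ) ^ q) :=
        meas_ge_le_lintegral_div (by fun_prop) (by simpa using ENNReal.ofReal_pos.mpr hε' |>.ne')
          ENNReal.ofReal_ne_top
      _ < ⊤ := ENNReal.div_lt_top hmom.ne (ENNReal.ofReal_pos.mpr hε').ne'
  have hμ0 : μ (Set.Iic 0) = 0 := by
    rw [hμ, Measure.restrict_apply measurableSet_Iic]
    refine measure_mono_null (Set.inter_subset_left) hν0
  haveI hSF : SigmaFinite μ := by
    refine ⟨⟨⟨fun n => Set.Iic 0 ∪ Set.Ici (1 / (n + 1) : ℝ), fun _ => trivial, fun n => ?_, ?_⟩⟩⟩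
    · refine lt_of_le_of_lt (measure_union_le _ _) ?_
      rw [hμ0, zero_add]; exact hfin n
    · ext x
      simp only [Set.mem_iUnion, Set.mem_univ, iff_true, Set.mem_union, Set.mem_Iic, Set.mem_Ici]
      rcases le_or_gt x 0 with hx | hx
      · exact ⟨0, Or.inl hx⟩
      · obtain ⟨n, hn⟩ := exists_nat_one_div_lt hx
        exact ⟨n, Or.inr hn.le⟩
  -- Step A: tail splitting
  have stepA : ∀ c : ℝ, ν (Set.Ici c) ≤ T + μ (Set.Ici c) := by
    intro c
    have hsub : Set.Ici c ⊆ (Set.Ici A ∪ Set.Ioo 0 A ∩ Set.Ici c) ∪ Set.Iic 0 := by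
      intro x hx
      rcases le_or_gt A x with h | h
      · exact Or.inl (Or.inl h)
      rcases le_or_gt x 0 with h0 | h0
      · exact Or.inr h0
      · exact Or.inl (Or.inr ⟨⟨h0, h⟩, hx⟩)
    calc ν (Set.Ici c) ≤ ν ((Set.Ici A ∪ Set.Ioo 0 A ∩ Set.Ici c) ∪ Set.Iic 0) :=
          measure_mono hsub
      _ ≤ ν (Set.Ici A ∪ Set.Ioo 0 A ∩ Set.Ici c) + ν (Set.Iic 0) := measure_union_le _ _
      _ ≤ (ν (Set.Ici A) + ν (Set.Ioo 0 A ∩ Set.Ici c)) + 0 := by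
          rw [hν0]; exact add_le_add_left (measure_union_le _ _) 0
      _ = T + μ (Set.Ici c) := by
          rw [add_zero, hμ, Measure.restrict_apply measurableSet_Ici, Set.inter_comm]
  -- Step: swap for inner integral
  have hGH : ∀ u : ℝ, 0 < u →
      (∫⁻ s in Set.Ioc 0 R, μ (Set.Ici (u / d * s ^ (1 - d)))) ≤
      ∫⁻ x, ENNReal.ofReal ((d * x / u) ^ q) ∂μ := by
    intro u hu
    have hmeas : Measurable fun p : ℝ × ℝ =>
        (Set.Ici (u / d * p.1 ^ (1 - d))).indicator (fun _ => (1 : ℝ≥0∞)) p.2 := by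
      have hset : MeasurableSet {p : ℝ × ℝ | u / d * p.1 ^ (1 - d) ≤ p.2} :=
        measurableSet_le (by fun_prop) measurable_snd
      have heq : (fun p : ℝ × ℝ =>
          (Set.Ici (u / d * p.1 ^ (1 - d))).indicator (fun _ => (1 : ℝ≥0∞)) p.2)
          = {p : ℝ × ℝ | u / d * p.1 ^ (1 - d) ≤ p.2}.indicator (fun _ => 1) := by
        ext p
        simp [Set.indicator_apply, Set.mem_Ici, Set.mem_setOf_eq]
      rw [heq]
      exact measurable_const.indicator hset
    have e1 : ∀ s : ℝ, μ (Set.Ici (u / d * s ^ (1 - d))) =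
        ∫⁻ x, (Set.Ici (u / d * s ^ (1 - d))).indicator (fun _ => (1 : ℝ≥0∞)) x ∂μ := by
      intro s
      rw [lintegral_indicator measurableSet_Ici]
      simp
    calc (∫⁻ s in Set.Ioc 0 R, μ (Set.Ici (u / d * s ^ (1 - d))))
        = ∫⁻ s in Set.Ioc 0 R, ∫⁻ x,
            (Set.Ici (u / d * s ^ (1 - d))).indicator (fun _ => (1 : ℝ≥0∞)) x ∂μ := by
          simp_rw [e1]
      _ = ∫⁻ x, (∫⁻ s in Set.Ioc 0 R,
            (Set.Ici (u / d * s ^ (1 - d))).indicator (fun _ => (1 : ℝ≥0∞)) x) ∂μ :=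
          lintegral_lintegral_swap (μ := volume.restrict (Set.Ioc 0 R)) (ν := μ)
            (f := fun s x => (Set.Ici (u / d * s ^ (1 - d))).indicator (fun _ => (1 : ℝ≥0∞)) x)
            hmeas.aemeasurable
      _ ≤ ∫⁻ x, ENNReal.ofReal ((d * x / u) ^ q) ∂μ := by
          refine lintegral_mono_ae ?_
          filter_upwards [ae_restrict_mem measurableSet_Ioo] with x hx
          have hx0 : 0 < x := hx.1
          have hSm : MeasurableSet {s : ℝ | u / d * s ^ (1 - d) ≤ x} :=
            measurableSet_le (by fun_prop) measurable_const
          have e2 : ∀ s : ℝ, (Set.Ici (u / d * s ^ (1 - d))).indicator (fun _ => (1 : ℝ≥0∞)) x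
              = {s : ℝ | u / d * s ^ (1 - d) ≤ x}.indicator (fun _ => (1 : ℝ≥0∞)) s := by
            intro s
            simp [Set.indicator_apply, Set.mem_Ici, Set.mem_setOf_eq]
          calc (∫⁻ s in Set.Ioc 0 R,
                (Set.Ici (u / d * s ^ (1 - d))).indicator (fun _ => (1 : ℝ≥0∞)) x)
              = ∫⁻ s in Set.Ioc 0 R,
                {s : ℝ | u / d * s ^ (1 - d) ≤ x}.indicator (fun _ => (1 : ℝ≥0∞)) s := by
                simp_rw [e2]
            _ = volume ({s : ℝ | u / d * s ^ (1 - d) ≤ x} ∩ Set.Ioc 0 R) := by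
                rw [lintegral_indicator hSm, setLIntegral_one, Measure.restrict_apply hSm]
            _ ≤ volume (Set.Ioc 0 ((d * x / u) ^ q)) := by
                refine measure_mono ?_
                rintro s ⟨hcs, hs0, _⟩
                refine ⟨hs0, ?_⟩
                have h2 : s ^ (1 - d) ≤ d * x / u := by
                  rw [le_div_iff₀ hu]
                  have := mul_le_mul_of_nonneg_left hcs hd0.le
                  calc s ^ (1 - d) * u = d * (u / d * s ^ (1 - d)) := by
                        field_simp
                    _ ≤ d * x := this
                have h3 := Real.rpow_le_rpow (Real.rpow_nonneg hs0.le _) h2 hq0.le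
                rwa [← Real.rpow_mul hs0.le, show (1 - d) * q = 1 by rw [hq]; field_simp,
                  Real.rpow_one] at h3
            _ = ENNReal.ofReal ((d * x / u) ^ q) := by
                rw [Real.volume_Ioc, sub_zero]
  -- real integral computations
  have hJ : (∫⁻ u in Set.Ioc 0 a, ENNReal.ofReal (u ^ (1 - q)))
      = ENNReal.ofReal (a ^ (2 - q) / (2 - q)) := by
    have hint : IntegrableOn (fun u : ℝ => u ^ (1 - q)) (Set.Ioc 0 a) := by
      rw [← intervalIntegrable_iff_integrableOn_Ioc_of_le ha.le]
      exact intervalIntegral.intervalIntegrable_rpow' (by linarith)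
    have hnn : 0 ≤ᵐ[volume.restrict (Set.Ioc 0 a)] fun u : ℝ => u ^ (1 - q) := by
      filter_upwards [ae_restrict_mem measurableSet_Ioc] with u hu
      exact Real.rpow_nonneg hu.1.le _
    rw [← ofReal_integral_eq_lintegral_ofReal hint hnn]
    congr 1
    rw [← intervalIntegral.integral_of_le ha.le, integral_rpow (Or.inl (by linarith)),
      show (1 - q) + 1 = 2 - q by ring, Real.zero_rpow h2q.ne', sub_zero]
  have hI : (∫⁻ u in Set.Ioc 0 a, ENNReal.ofReal u) = ENNReal.ofReal (a ^ 2 / 2) := by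
    have hint : IntegrableOn (fun u : ℝ => u) (Set.Ioc 0 a) := by
      rw [← intervalIntegrable_iff_integrableOn_Ioc_of_le ha.le]
      exact intervalIntegral.intervalIntegrable_id
    have hnn : 0 ≤ᵐ[volume.restrict (Set.Ioc 0 a)] fun u : ℝ => u := by
      filter_upwards [ae_restrict_mem measurableSet_Ioc] with u hu using hu.1.le
    rw [← ofReal_integral_eq_lintegral_ofReal hint hnn]
    congr 1
    rw [← intervalIntegral.integral_of_le ha.le, integral_id]
    ring
  -- second swap and computation
  have key2 : (∫⁻ u in Set.Ioc 0 a,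
        ENNReal.ofReal u * ∫⁻ x, ENNReal.ofReal ((d * x / u) ^ q) ∂μ)
      ≤ ENNReal.ofReal (d ^ q * (a ^ (2 - q) / (2 - q))) * M := by
    have hmeas2 : Measurable fun p : ℝ × ℝ =>
        ENNReal.ofReal p.1 * ENNReal.ofReal ((d * p.2 / p.1) ^ q) := by fun_prop
    have e0 : ∀ u : ℝ, ENNReal.ofReal u * ∫⁻ x, ENNReal.ofReal ((d * x / u) ^ q) ∂μ
        = ∫⁻ x, ENNReal.ofReal u * ENNReal.ofReal ((d * x / u) ^ q) ∂μ := fun u =>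
      (lintegral_const_mul' _ _ ENNReal.ofReal_ne_top).symm
    calc (∫⁻ u in Set.Ioc 0 a,
          ENNReal.ofReal u * ∫⁻ x, ENNReal.ofReal ((d * x / u) ^ q) ∂μ)
        = ∫⁻ u in Set.Ioc 0 a, ∫⁻ x,
            ENNReal.ofReal u * ENNReal.ofReal ((d * x / u) ^ q) ∂μ := by simp_rw [e0]
      _ = ∫⁻ x, (∫⁻ u in Set.Ioc 0 a,
            ENNReal.ofReal u * ENNReal.ofReal ((d * x / u) ^ q)) ∂μ :=
          lintegral_lintegral_swap (μ := volume.restrict (Set.Ioc 0 a)) (ν := μ)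
            (f := fun u x => ENNReal.ofReal u * ENNReal.ofReal ((d * x / u) ^ q))
            hmeas2.aemeasurable
      _ ≤ ∫⁻ x, ENNReal.ofReal (d ^ q * (a ^ (2 - q) / (2 - q))) * ENNReal.ofReal (x ^ q) ∂μ := by
          refine lintegral_mono_ae ?_
          filter_upwards [ae_restrict_mem measurableSet_Ioo] with x hx
          have hx0 : 0 < x := hx.1
          have e3 : ∀ᵐ u ∂(volume.restrict (Set.Ioc 0 a)),
              ENNReal.ofReal u * ENNReal.ofReal ((d * x / u) ^ q)
              = ENNReal.ofReal (d ^ q * x ^ q) * ENNReal.ofReal (u ^ (1 - q)) := by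
            filter_upwards [ae_restrict_mem measurableSet_Ioc] with u hu
            have hu0 : 0 < u := hu.1
            have huq : (0:ℝ) < u ^ q := Real.rpow_pos_of_pos hu0 q
            have hr : u * (d * x / u) ^ q = d ^ q * x ^ q * u ^ (1 - q) := by
              rw [Real.div_rpow (by positivity) hu0.le, Real.mul_rpow hd0.le hx0.le,
                Real.rpow_sub hu0, Real.rpow_one]
              field_simp
            rw [← ENNReal.ofReal_mul hu0.le, hr,
              ENNReal.ofReal_mul (by positivity : (0:ℝ) ≤ d ^ q * x ^ q)]
          calc (∫⁻ u in Set.Ioc 0 a, ENNReal.ofReal u * ENNReal.ofReal ((d * x / u) ^ q))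
              = ∫⁻ u in Set.Ioc 0 a,
                  ENNReal.ofReal (d ^ q * x ^ q) * ENNReal.ofReal (u ^ (1 - q)) :=
                lintegral_congr_ae e3
            _ = ENNReal.ofReal (d ^ q * x ^ q) * ENNReal.ofReal (a ^ (2 - q) / (2 - q)) := by
                rw [lintegral_const_mul' _ _ ENNReal.ofReal_ne_top, hJ]
            _ = ENNReal.ofReal (d ^ q * (a ^ (2 - q) / (2 - q))) * ENNReal.ofReal (x ^ q) := by
                rw [← ENNReal.ofReal_mul (by positivity : (0:ℝ) ≤ d ^ q * x ^ q),
                  ← ENNReal.ofReal_mul (by positivity : (0:ℝ) ≤ d ^ q * (a ^ (2 - q) / (2 - q)))]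
                congr 1
                ring
            _ ≤ ENNReal.ofReal (d ^ q * (a ^ (2 - q) / (2 - q))) * ENNReal.ofReal (x ^ q) :=
                le_rfl
      _ = ENNReal.ofReal (d ^ q * (a ^ (2 - q) / (2 - q))) * M :=
          lintegral_const_mul' _ _ ENNReal.ofReal_ne_top
  have hTR : T * ENNReal.ofReal R ≠ ⊤ := ENNReal.mul_ne_top htail.ne ENNReal.ofReal_ne_top
  have hKeq : a ^ 2 * (1 - d) / (1 - 2 * d) * (d / a) ^ q
      = d ^ q * (a ^ (2 - q) / (2 - q)) := by
    have haq : (0:ℝ) < a ^ q := Real.rpow_pos_of_pos ha q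
    have h1 : (d / a : ℝ) ^ q = d ^ q / a ^ q := Real.div_rpow hd0.le ha.le q
    have h2 : a ^ (2 - q) = a ^ (2:ℝ) / a ^ q := Real.rpow_sub ha 2 q
    have h4 : 2 - q = (1 - 2 * d) / (1 - d) := by rw [hq]; field_simp; ring
    rw [h1, h2, Real.rpow_two, h4]
    field_simp
  have hK0 : (0:ℝ) ≤ a ^ 2 * (1 - d) / (1 - 2 * d) := by positivity
  calc (∫⁻ u in Set.Ioc 0 a,
        ENNReal.ofReal u * ∫⁻ s in Set.Ioc 0 R, ν (Set.Ici (u / d * s ^ (1 - d))))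
      ≤ ∫⁻ u in Set.Ioc 0 a, (ENNReal.ofReal u * (T * ENNReal.ofReal R)
          + ENNReal.ofReal u * ∫⁻ x, ENNReal.ofReal ((d * x / u) ^ q) ∂μ) := by
        refine lintegral_mono_ae ?_
        filter_upwards [ae_restrict_mem measurableSet_Ioc] with u hu
        have h1 : (∫⁻ s in Set.Ioc 0 R, ν (Set.Ici (u / d * s ^ (1 - d))))
            ≤ T * ENNReal.ofReal R + ∫⁻ x, ENNReal.ofReal ((d * x / u) ^ q) ∂μ := by
          calc (∫⁻ s in Set.Ioc 0 R, ν (Set.Ici (u / d * s ^ (1 - d))))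
              ≤ ∫⁻ s in Set.Ioc 0 R, (T + μ (Set.Ici (u / d * s ^ (1 - d)))) :=
                lintegral_mono fun s => stepA _
            _ = T * ENNReal.ofReal R
                + ∫⁻ s in Set.Ioc 0 R, μ (Set.Ici (u / d * s ^ (1 - d))) := by
                rw [lintegral_add_left measurable_const, setLIntegral_const,
                  Real.volume_Ioc, sub_zero]
            _ ≤ _ := add_le_add_right (hGH u hu.1) _
        calc ENNReal.ofReal u * ∫⁻ s in Set.Ioc 0 R, ν (Set.Ici (u / d * s ^ (1 - d)))
            ≤ ENNReal.ofReal u * (T * ENNReal.ofReal R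
                + ∫⁻ x, ENNReal.ofReal ((d * x / u) ^ q) ∂μ) := mul_le_mul_right h1 _
          _ = _ := mul_add _ _ _
    _ = (∫⁻ u in Set.Ioc 0 a, ENNReal.ofReal u) * (T * ENNReal.ofReal R)
        + ∫⁻ u in Set.Ioc 0 a,
            ENNReal.ofReal u * ∫⁻ x, ENNReal.ofReal ((d * x / u) ^ q) ∂μ := by
        rw [lintegral_add_left (by fun_prop), lintegral_mul_const' _ _ hTR]
    _ ≤ ENNReal.ofReal (a ^ 2 / 2) * (T * ENNReal.ofReal R)
        + ENNReal.ofReal (d ^ q * (a ^ (2 - q) / (2 - q))) * M := by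
        rw [hI]; exact add_le_add_right key2 _
    _ ≤ ENNReal.ofReal (a ^ 2 * (1 - d) / (1 - 2 * d)) *
          (ENNReal.ofReal R * T + ENNReal.ofReal ((d / a) ^ q) * M) := by
        rw [mul_add]
        have e2 : ENNReal.ofReal (a ^ 2 * (1 - d) / (1 - 2 * d)) *
            (ENNReal.ofReal ((d / a) ^ q) * M)
            = ENNReal.ofReal (d ^ q * (a ^ (2 - q) / (2 - q))) * M := by
          rw [← mul_assoc, ← ENNReal.ofReal_mul hK0, hKeq]
        rw [e2]
        refine add_le_add ?_ le_rfl
        have hhalf : a ^ 2 / 2 ≤ a ^ 2 * (1 - d) / (1 - 2 * d) := by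
          rw [div_le_div_iff₀ (by norm_num) h12d]
          nlinarith [sq_nonneg a]
        calc ENNReal.ofReal (a ^ 2 / 2) * (T * ENNReal.ofReal R)
            ≤ ENNReal.ofReal (a ^ 2 * (1 - d) / (1 - 2 * d)) * (T * ENNReal.ofReal R) :=
              mul_le_mul_left (ENNReal.ofReal_le_ofReal hhalf) _
          _ = ENNReal.ofReal (a ^ 2 * (1 - d) / (1 - 2 * d)) * (ENNReal.ofReal R * T) := by
              rw [mul_comm T]
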